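/- Exponential-integrator equivalence: if ẑ satisfies the update ẑ_{t-h} = ẑ_t + (Φ_{t-h} - Φ_t) ε(A_t⁻¹ ẑ_t, t) with ẑ_t = A_t z_t, A invertible and Φ_t = (1/2) ∫_0^t A_s G_s G_s^T L_s^{-T} ds, then z satisfies z_{t-h} = ψ(t-h, t) z_t + (1/2) (∫_t^{t-h} ψ(t-h, s) G_s G_s^T L_s^{-T} ds) ε(z_t, t), where ψ(a, b) = A_a⁻¹ A_b. -/

import Mathlib

attribute [local instance] Matrix.normedAddCommGroup Matrix.normedSpace

open Matrix intervalIntegral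

/-- Exponential-integrator equivalence: if the transformed state satisfies the update
`ẑ_{t-h} = ẑ_t + (Φ_{t-h} - Φ_t) ε(A_t⁻¹ ẑ_t, t)` with `ẑ_t = A_t z_t` and
`Φ_t = (1/2) ∫_0^t A_s G_s G_sᵀ L_s⁻ᵀ ds`, then the original-space state satisfies
`z_{t-h} = ψ(t-h, t) z_t + (1/2) (∫_t^{t-h} ψ(t-h, s) G_s G_sᵀ L_s⁻ᵀ ds) ε(z_t, t)`
where `ψ(a, b) = A_a⁻¹ A_b`. -/
theorem exponential_integrator_equivalence
    (d : ℕ)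
    (A G L : ℝ → Matrix (Fin d) (Fin d) ℝ)
    (hAdiff : Differentiable ℝ A) (hAunit : ∀ t, IsUnit (A t))
    (hGcont : Continuous G) (hLcont : Continuous L) (hLunit : ∀ s, IsUnit (L s))
    (ε : (Fin d → ℝ) → ℝ → (Fin d → ℝ))
    (Φ : ℝ → Matrix (Fin d) (Fin d) ℝ)
    (hΦ : ∀ t, Φ t = (1/2 : ℝ) • ∫ s in (0:ℝ)..t, A s * G s * (G s)ᵀ * ((L s)ᵀ)⁻¹)
    (ψ : ℝ → ℝ → Matrix (Fin d) (Fin d) ℝ)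
    (hψ : ∀ a b, ψ a b = (A a)⁻¹ * A b)
    (t h : ℝ) (hh : 0 < h)
    (zhat : ℝ → (Fin d → ℝ)) (z : ℝ → (Fin d → ℝ))
    (hz : ∀ u, z u = ((A u)⁻¹).mulVec (zhat u))
    (hupdate : zhat (t - h) = zhat t +
      (Φ (t - h) - Φ t).mulVec (ε (((A t)⁻¹).mulVec (zhat t)) t)) :
    z (t - h) = (ψ (t - h) t).mulVec (z t) +
      ((1/2 : ℝ) • ∫ s in t..(t - h),
          ψ (t - h) s * G s * (G s)ᵀ * ((L s)ᵀ)⁻¹).mulVec (ε (z t) t) := by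
  have hd : ∀ u, IsUnit (A u).det := fun u => (Matrix.isUnit_iff_isUnit_det _).mp (hAunit u)
  set B : Matrix (Fin d) (Fin d) ℝ := (A (t - h))⁻¹ with hB
  -- continuity of the integrand
  have h1 : Continuous fun s => (L s)ᵀ := hLcont.matrix_transpose
  have hcontinv : Continuous fun s => ((L s)ᵀ)⁻¹ := by
    have hdet : Continuous fun s => ((L s)ᵀ).det := h1.matrix_det
    have hne : ∀ s, ((L s)ᵀ).det ≠ 0 := fun s => by
      have : IsUnit ((L s)ᵀ).det := by
        rw [Matrix.det_transpose]
        exact (Matrix.isUnit_iff_isUnit_det _).mp (hLunit s)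
      exact this.ne_zero
    have heq : (fun s => ((L s)ᵀ)⁻¹) = fun s => (((L s)ᵀ).det)⁻¹ • ((L s)ᵀ).adjugate := by
      funext s
      rw [Matrix.inv_def, Ring.inverse_eq_inv]
    rw [heq]
    exact (hdet.inv₀ hne).smul h1.matrix_adjugate
  have hfc : Continuous fun s => A s * G s * (G s)ᵀ * ((L s)ᵀ)⁻¹ :=
    ((hAdiff.continuous.matrix_mul hGcont).matrix_mul hGcont.matrix_transpose).matrix_mul hcontinv
  have hint : ∀ a b : ℝ, @IntervalIntegrable _ UniformSpace.toTopologicalSpace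
      (@ENormedAddCommMonoid.toENormedAddMonoid _ _
        (@NormedAddCommGroup.toENormedAddCommMonoid _ Matrix.normedAddCommGroup))
      (fun s => A s * G s * (G s)ᵀ * ((L s)ᵀ)⁻¹) MeasureTheory.volume a b :=
    fun a b => hfc.intervalIntegrable a b
  -- Φ difference as interval integral
  have hΦdiff : Φ (t - h) - Φ t
      = (1/2 : ℝ) • ∫ s in t..(t - h), A s * G s * (G s)ᵀ * ((L s)ᵀ)⁻¹ := by
    rw [hΦ, hΦ, ← smul_sub,
      intervalIntegral.integral_interval_sub_left (hint 0 (t - h)) (hint 0 t)]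
  -- pull B inside the integral
  have key : B * (Φ (t - h) - Φ t)
      = (1/2 : ℝ) • ∫ s in t..(t - h), ψ (t - h) s * G s * (G s)ᵀ * ((L s)ᵀ)⁻¹ := by
    rw [hΦdiff, mul_smul_comm]
    congr 1
    have := ((LinearMap.mulLeft ℝ B).toContinuousLinearMap).intervalIntegral_comp_comm
      (hint t (t - h))
    erw [LinearMap.coe_toContinuousLinearMap'] at this
    simp only [LinearMap.mulLeft_apply] at this
    rw [← this]
    refine intervalIntegral.integral_congr fun s _ => ?_
    rw [hψ]
    simp only [mul_assoc]
    rfl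
  -- zhat t in terms of z t
  have hzt : (A t).mulVec (z t) = zhat t := by
    rw [hz, Matrix.mulVec_mulVec, Matrix.mul_nonsing_inv _ (hd t), Matrix.one_mulVec]
  have hε : ((A t)⁻¹).mulVec (zhat t) = z t := (hz t).symm
  calc z (t - h) = B.mulVec (zhat (t - h)) := hz _
    _ = B.mulVec (zhat t) + B.mulVec ((Φ (t - h) - Φ t).mulVec (ε (z t) t)) := by
        rw [hupdate, hε, Matrix.mulVec_add]
    _ = (ψ (t - h) t).mulVec (z t) +
        ((1/2 : ℝ) • ∫ s in t..(t - h),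
          ψ (t - h) s * G s * (G s)ᵀ * ((L s)ᵀ)⁻¹).mulVec (ε (z t) t) := by
        rw [← hzt, Matrix.mulVec_mulVec, Matrix.mulVec_mulVec, key, hψ]
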